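/- Let μ be the Gauss measure on [0,1] and let a_k(x) denote the k-th continued fraction digit of x. For any c > 0, the set of x ∈ [0,1] for which there exists m₀ ∈ ℕ such that for all m ≥ m₀ one has max_{1≤k≤m} a_k(x) ≥ c·m, has μ-measure zero. -/

import Mathlib

open MeasureTheory Filter Set

/-- The Gauss map `x ↦ 1/x mod 1`. -/
noncomputable def gaussMap (x : ℝ) : ℝ := Int.fract x⁻¹

/-- The `k`-th continued fraction digit `a_k(x) = ⌊1 / G^{k-1}(x)⌋` (for `k ≥ 1`). -/
noncomputable def cfDigit (k : ℕ) (x : ℝ) : ℤ := ⌊(gaussMap^[k - 1] x)⁻¹⌋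

/-- The Gauss measure on `[0,1]`, with density `(1/log 2) · 1/(1+x)` with respect to
Lebesgue measure. -/
noncomputable def gaussMeasure : Measure ℝ :=
  (volume.restrict (Set.Icc (0 : ℝ) 1)).withDensity
    fun x => ENNReal.ofReal ((Real.log 2)⁻¹ * (1 + x)⁻¹)

set_option maxRecDepth 8000
open scoped ENNReal NNReal

namespace CFAux

/-- The set of irrational points of `(0,1)`. -/
def Irr01 : Set ℝ := {x | x ∈ Set.Ioo (0:ℝ) 1 ∧ Irrational x}

/-- `dig i x` is the `(i+1)`-st digit, as a natural number. -/
noncomputable def dig : ℕ → ℝ → ℕ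
  | 0, x => (⌊x⁻¹⌋).toNat
  | (i+1), x => dig i (gaussMap x)

noncomputable def digitsL (n : ℕ) (x : ℝ) : List ℕ :=
  (List.range n).map fun i => dig i x

lemma dig_eq (i : ℕ) (x : ℝ) : dig i x = (⌊(gaussMap^[i] x)⁻¹⌋).toNat := by
  induction i generalizing x with
  | zero => rfl
  | succ i ih => rw [dig, ih, Function.iterate_succ_apply]

lemma digitsL_length (n : ℕ) (x : ℝ) : (digitsL n x).length = n := by
  simp [digitsL]

lemma digitsL_get (n : ℕ) (x : ℝ) (i : ℕ) (hi : i < n) :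
    (digitsL n x).getD i 0 = dig i x := by
  simp [digitsL, List.getD_eq_getElem?_getD, List.getElem?_map, List.getElem?_range hi]

lemma digitsL_succ (n : ℕ) (x : ℝ) :
    digitsL (n+1) x = dig 0 x :: digitsL n (gaussMap x) := by
  simp only [digitsL, List.range_succ_eq_map, List.map_cons, List.map_map]
  rfl

lemma mem_Irr01 {x : ℝ} (h : x ∈ Irr01) : 0 < x ∧ x < 1 ∧ Irrational x :=
  ⟨h.1.1, h.1.2, h.2⟩

lemma one_lt_inv_of_Irr01 {x : ℝ} (h : x ∈ Irr01) : 1 < x⁻¹ :=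
  (one_lt_inv₀ h.1.1).mpr h.1.2

/-- Basic step facts. -/
lemma gaussMap_mem_Irr01 {x : ℝ} (h : x ∈ Irr01) : gaussMap x ∈ Irr01 := by
  have hinv : Irrational x⁻¹ := h.2.inv
  have hfr : Irrational (gaussMap x) := by
    have h2 : Irrational (x⁻¹ - ⌊x⁻¹⌋) := hinv.sub_intCast _
    show Irrational (Int.fract x⁻¹)
    rw [Int.fract]; exact h2
  refine ⟨⟨?_, ?_⟩, hfr⟩
  · rcases lt_or_eq_of_le (Int.fract_nonneg x⁻¹) with h0 | h0
    · exact h0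
    · exact absurd (show gaussMap x = ((0:ℤ):ℝ) by simpa [gaussMap] using h0.symm)
        (hfr.ne_int 0)
  · exact Int.fract_lt_one _

lemma dig_zero_pos {x : ℝ} (h : x ∈ Irr01) : 1 ≤ dig 0 x := by
  have := one_lt_inv_of_Irr01 h
  have h1 : (1:ℤ) ≤ ⌊x⁻¹⌋ := by
    exact_mod_cast Int.le_floor.2 (by exact_mod_cast this.le)
  simpa [dig] using Int.toNat_le_toNat h1

lemma psi_dig_gauss {x : ℝ} (h : x ∈ Irr01) :
    ((dig 0 x : ℝ) + gaussMap x)⁻¹ = x := by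
  have hx0 : x ≠ 0 := ne_of_gt h.1.1
  have h1x : (1:ℝ) ≤ x⁻¹ := (one_lt_inv_of_Irr01 h).le
  have hfl : (0:ℤ) ≤ ⌊x⁻¹⌋ := le_trans zero_le_one (Int.le_floor.2 (by exact_mod_cast h1x))
  have : ((dig 0 x : ℝ)) = (⌊x⁻¹⌋ : ℝ) := by
    show ((⌊x⁻¹⌋.toNat : ℕ) : ℝ) = _
    rw [← Int.cast_natCast, Int.toNat_of_nonneg hfl]
  rw [this]
  have : (⌊x⁻¹⌋ : ℝ) + gaussMap x = x⁻¹ := by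
    unfold gaussMap
    rw [Int.fract]; ring
  rw [this, inv_inv]

end CFAux

namespace CFAux

noncomputable def cylMap : List ℕ → ℝ → ℝ
  | [], y => y
  | b :: w, y => ((b:ℝ) + cylMap w y)⁻¹

lemma psi_mem_Irr01 {b : ℕ} (hb : 1 ≤ b) {z : ℝ} (hz : z ∈ Irr01) :
    ((b:ℝ) + z)⁻¹ ∈ Irr01 := by
  have hz0 := hz.1.1
  have hb1 : (1:ℝ) ≤ (b:ℝ) := by exact_mod_cast hb
  have hgt1 : 1 < (b:ℝ) + z := by linarith
  have hpos : 0 < (b:ℝ) + z := by linarith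
  refine ⟨⟨inv_pos.2 hpos, (inv_lt_one₀ hpos).2 hgt1⟩, ?_⟩
  have : Irrational ((b:ℝ) + z) := by
    have := hz.2.intCast_add (b:ℤ)
    simpa using this
  exact this.inv

lemma gaussMap_psi {b : ℕ} {z : ℝ} (hz : z ∈ Irr01) :
    gaussMap (((b:ℝ) + z)⁻¹) = z := by
  unfold gaussMap
  rw [inv_inv]
  have : ((b:ℝ) + z) = ((b:ℤ):ℝ) + z := by push_cast; ring
  rw [this, Int.fract_intCast_add, Int.fract_eq_self.2 ⟨hz.1.1.le, hz.1.2⟩]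

lemma dig_zero_psi {b : ℕ} {z : ℝ} (hz : z ∈ Irr01) :
    dig 0 (((b:ℝ) + z)⁻¹) = b := by
  have hfl : ⌊(b:ℝ) + z⌋ = (b:ℤ) := by
    have : ((b:ℝ) + z) = ((b:ℤ):ℝ) + z := by push_cast; ring
    rw [this, Int.floor_intCast_add, Int.floor_eq_zero_iff.2 ⟨hz.1.1.le, hz.1.2⟩, add_zero]
  show (⌊(((b:ℝ) + z)⁻¹)⁻¹⌋).toNat = b
  rw [inv_inv, hfl]
  simp

lemma cylMap_spec : ∀ (w : List ℕ), (∀ b ∈ w, 1 ≤ b) → ∀ y, y ∈ Irr01 →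
    cylMap w y ∈ Irr01 ∧ gaussMap^[w.length] (cylMap w y) = y ∧
      digitsL w.length (cylMap w y) = w := by
  intro w
  induction w with
  | nil => intro _ y hy; exact ⟨hy, rfl, rfl⟩
  | cons b w ih =>
    intro hadm y hy
    have hb : 1 ≤ b := hadm b (List.mem_cons_self)
    obtain ⟨hz, hit, hdg⟩ := ih (fun b hb => hadm b (List.mem_cons_of_mem _ hb)) y hy
    set z := cylMap w y with hzdef
    have hcyl : cylMap (b :: w) y = ((b:ℝ) + z)⁻¹ := rfl
    have hmem := psi_mem_Irr01 hb hz
    have hG : gaussMap (((b:ℝ) + z)⁻¹) = z := gaussMap_psi hz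
    refine ⟨by rw [hcyl]; exact hmem, ?_, ?_⟩
    · rw [hcyl, List.length_cons, Function.iterate_succ_apply, hG, hit]
    · rw [hcyl, List.length_cons, digitsL_succ, hG, hdg, dig_zero_psi hz]

lemma digits_spec : ∀ (n : ℕ) (x : ℝ), x ∈ Irr01 →
    gaussMap^[n] x ∈ Irr01 ∧ (∀ b ∈ digitsL n x, 1 ≤ b) ∧
      cylMap (digitsL n x) (gaussMap^[n] x) = x := by
  intro n
  induction n with
  | zero => intro x hx; exact ⟨hx, by simp [digitsL], rfl⟩
  | succ n ih =>
    intro x hx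
    have hGx : gaussMap x ∈ Irr01 := gaussMap_mem_Irr01 hx
    obtain ⟨hit, hadm, hcyl⟩ := ih (gaussMap x) hGx
    rw [digitsL_succ, Function.iterate_succ_apply]
    refine ⟨hit, ?_, ?_⟩
    · intro b hb
      rcases List.mem_cons.1 hb with rfl | hb
      · exact dig_zero_pos hx
      · exact hadm b hb
    · show ((dig 0 x : ℝ) + cylMap (digitsL n (gaussMap x)) (gaussMap^[n] (gaussMap x)))⁻¹ = x
      rw [hcyl]
      exact psi_dig_gauss hx

lemma iterate_mem_Irr01 {x : ℝ} (hx : x ∈ Irr01) (n : ℕ) : gaussMap^[n] x ∈ Irr01 :=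
  (digits_spec n x hx).1

lemma dig_pos {x : ℝ} (hx : x ∈ Irr01) (i : ℕ) : 1 ≤ dig i x := by
  rw [dig_eq]
  exact dig_zero_pos (iterate_mem_Irr01 hx i)

lemma cfDigit_eq_dig {x : ℝ} (hx : x ∈ Irr01) (k : ℕ) (hk : 1 ≤ k) :
    cfDigit k x = (dig (k-1) x : ℤ) := by
  rw [dig_eq, cfDigit]
  have h1 : gaussMap^[k-1] x ∈ Irr01 := iterate_mem_Irr01 hx (k-1)
  have : (1:ℤ) ≤ ⌊(gaussMap^[k-1] x)⁻¹⌋ :=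
    Int.le_floor.2 (by exact_mod_cast (one_lt_inv_of_Irr01 h1).le)
  rw [Int.toNat_of_nonneg (le_trans zero_le_one this)]

lemma cfDigit_shift (n k : ℕ) (hk : n + 1 ≤ k) (x : ℝ) :
    cfDigit k x = cfDigit (k - n) (gaussMap^[n] x) := by
  unfold cfDigit
  rw [← Function.iterate_add_apply]
  have h : k - n - 1 + n = k - 1 := by omega
  rw [h]

end CFAux
namespace CFAux

lemma cyl_coef : ∀ (w : List ℕ), (∀ b ∈ w, 1 ≤ b) →
    ∃ p p' q q' : ℝ, 0 ≤ p ∧ 0 ≤ p' ∧ 1 ≤ q ∧ 0 ≤ q' ∧ q' ≤ q ∧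
      (p'*q - p*q')^2 = 1 ∧
      (∀ y : ℝ, 0 ≤ y → cylMap w y = (p + p'*y)/(q + q'*y)) ∧
      ((p' ≤ p ∧ q' ≤ q) ∨ (p = 0 ∧ p' = 1 ∧ q = 1 ∧ q' = 0)) := by
  intro w
  induction w with
  | nil =>
    intro _
    refine ⟨0, 1, 1, 0, le_refl _, zero_le_one, le_refl _, le_refl _, zero_le_one, by norm_num,
      ?_, Or.inr ⟨rfl, rfl, rfl, rfl⟩⟩
    intro y hy
    show y = _
    norm_num
  | cons b w ih =>
    intro hadm
    have hb : 1 ≤ b := hadm b (List.mem_cons_self)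
    have hbR : (1:ℝ) ≤ (b:ℝ) := by exact_mod_cast hb
    obtain ⟨p, p', q, q', hp, hp', hq, hq', hq'q, hdet, hform, hinv⟩ :=
      ih (fun b hb => hadm b (List.mem_cons_of_mem _ hb))
    refine ⟨q, q', (b:ℝ)*q + p, (b:ℝ)*q' + p', by linarith, hq',
      by nlinarith, by positivity, ?_, ?_, ?_, ?_⟩
    · rcases hinv with ⟨hpp, hqq⟩ | ⟨e1, e2, e3, e4⟩
      · nlinarith
      · rw [e1, e2, e3, e4]; simpa using hbR
    · have : q' * ((b:ℝ)*q + p) - q * ((b:ℝ)*q' + p') = -(p'*q - p*q') := by ring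
      rw [this]
      nlinarith [hdet]
    · intro y hy
      have hden : 0 < q + q' * y := by nlinarith
      have hden2 : 0 < (b:ℝ)*(q + q'*y) + (p + p'*y) := by nlinarith
      show ((b:ℝ) + cylMap w y)⁻¹ = _
      rw [hform y hy]
      have hne : q + q' * y ≠ 0 := ne_of_gt hden
      have hstep : (b:ℝ) + (p + p'*y)/(q+q'*y)
          = (((b:ℝ)*q+p) + ((b:ℝ)*q'+p')*y)/(q+q'*y) := by
        field_simp
        ring
      rw [hstep, inv_div]
    · left
      constructor
      · rcases hinv with ⟨hpp, hqq⟩ | ⟨e1, e2, e3, e4⟩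
        · exact hq'q
        · rw [e3, e4]; linarith
      · rcases hinv with ⟨hpp, hqq⟩ | ⟨e1, e2, e3, e4⟩
        · nlinarith
        · rw [e1, e2, e3, e4]; simpa using hbR

end CFAux
namespace CFAux

lemma measurableSet_Irr01 : MeasurableSet Irr01 := by
  have : Irr01 = Set.Ioo (0:ℝ) 1 \ Set.range ((↑) : ℚ → ℝ) := by
    ext x; simp [Irr01, Irrational, Set.mem_diff]
  rw [this]
  exact measurableSet_Ioo.diff (Set.countable_range _).measurableSet

lemma Irr01_subset : Irr01 ⊆ Set.Ioo (0:ℝ) 1 := fun x hx => hx.1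

lemma volume_inter_Irr01 (B : Set ℝ) :
    volume (B ∩ Irr01) = volume (B ∩ Set.Ioo 0 1) := by
  have h1 : B ∩ Irr01 = (B ∩ Set.Ioo 0 1) \ Set.range ((↑) : ℚ → ℝ) := by
    ext x; simp [Irr01, Irrational, Set.mem_diff]; tauto
  rw [h1, measure_diff_null ((Set.countable_range _).measure_zero _)]

lemma volume_Irr01 : volume Irr01 = 1 := by
  have h := volume_inter_Irr01 Set.univ
  simp only [Set.univ_inter] at h
  rw [h, Real.volume_Ioo]
  norm_num

lemma cyl_image_bounds (w : List ℕ) (hadm : ∀ b ∈ w, 1 ≤ b) :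
    ∃ r : ℝ, 0 < r ∧ ∀ s : Set ℝ, MeasurableSet s → s ⊆ Set.Ioo 0 1 →
      ENNReal.ofReal r * volume s ≤ volume (cylMap w '' s) ∧
      volume (cylMap w '' s) ≤ 4 * ENNReal.ofReal r * volume s := by
  obtain ⟨p, p', q, q', hp, hp', hq, hq', hq'q, hdet, hform, -⟩ := cyl_coef w hadm
  have habs : |p'*q - p*q'| = 1 := by
    rcases sq_eq_one_iff.mp hdet with h | h <;> rw [h] <;> norm_num
  refine ⟨(q+q')⁻¹^2, by positivity, ?_⟩
  intro s hs hsub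
  set D : ℝ → ℝ := fun y => (p'*q - p*q')/(q + q'*y)^2 with hD
  have hderiv : ∀ x ∈ s, HasDerivWithinAt (cylMap w) (D x) s x := by
    intro x hx
    have hx01 := hsub hx
    have hden : q + q'*x ≠ 0 := by nlinarith [hx01.1]
    have h1 : HasDerivAt (fun y : ℝ => p + p'*y) p' x := by
      simpa using ((hasDerivAt_id x).const_mul p').const_add p
    have h2 : HasDerivAt (fun y : ℝ => q + q'*y) q' x := by
      simpa using ((hasDerivAt_id x).const_mul q').const_add q
    have h3 : HasDerivAt (fun y : ℝ => (p + p'*y)/(q + q'*y))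
        ((p' * (q + q'*x) - (p + p'*x) * q')/(q + q'*x)^2) x := h1.div h2 hden
    have heq : (p' * (q + q'*x) - (p + p'*x) * q') = p'*q - p*q' := by ring
    rw [heq] at h3
    refine h3.hasDerivWithinAt.congr ?_ ?_
    · intro y hy
      exact (hform y (hsub hy).1.le)
    · exact hform x hx01.1.le
  have hinj : Set.InjOn (cylMap w) s := by
    intro y1 h1 y2 h2 heq
    have h1' := hsub h1
    have h2' := hsub h2
    have hd1 : (0:ℝ) < q + q'*y1 := by nlinarith [h1'.1]
    have hd2 : (0:ℝ) < q + q'*y2 := by nlinarith [h2'.1]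
    rw [hform y1 h1'.1.le, hform y2 h2'.1.le, div_eq_div_iff (ne_of_gt hd1) (ne_of_gt hd2)] at heq
    have hfac : (p'*q - p*q') * (y1 - y2) = 0 := by linear_combination heq
    have hdne : p'*q - p*q' ≠ 0 := by
      intro h0
      rw [h0] at habs
      norm_num at habs
    have := mul_eq_zero.mp hfac
    rcases this with h | h
    · exact absurd h hdne
    · linarith
  have himg : volume (cylMap w '' s)
      = ∫⁻ x in s, ENNReal.ofReal |D x| := by
    have := lintegral_image_eq_lintegral_abs_det_fderiv_mul volume hs
      (fun x hx => ((hderiv x hx).hasFDerivWithinAt :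
        HasFDerivWithinAt (cylMap w) ((1:ℝ →L[ℝ] ℝ).smulRight (D x)) s x)) hinj (fun _ => 1)
    simp only [lintegral_one, Measure.restrict_apply MeasurableSet.univ, Set.univ_inter,
      mul_one, ContinuousLinearMap.det_toSpanSingleton] at this
    exact this
  have habsD : ∀ x ∈ s, |D x| = ((q + q'*x)^2)⁻¹ := by
    intro x hx
    have hx01 := hsub hx
    have hden : (0:ℝ) < q + q'*x := by nlinarith [hx01.1]
    rw [hD]
    simp only [abs_div, habs, abs_pow, abs_of_pos hden]
    rw [one_div]
  constructor
  · rw [himg]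
    calc ENNReal.ofReal ((q+q')⁻¹^2) * volume s
        = ∫⁻ _ in s, ENNReal.ofReal ((q+q')⁻¹^2) := (setLIntegral_const s _).symm
      _ ≤ ∫⁻ x in s, ENNReal.ofReal |D x| := by
          refine setLIntegral_mono' hs ?_
          intro x hx
          refine ENNReal.ofReal_le_ofReal ?_
          rw [habsD x hx]
          have hx01 := hsub hx
          have hden : (0:ℝ) < q + q'*x := by nlinarith [hx01.1]
          rw [inv_pow]
          refine inv_anti₀ (by positivity) ?_
          have : q + q'*x ≤ q + q' := by nlinarith [hx01.2]
          nlinarith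
  · rw [himg]
    calc ∫⁻ x in s, ENNReal.ofReal |D x|
        ≤ ∫⁻ _ in s, ENNReal.ofReal (4 * (q+q')⁻¹^2) := by
          refine setLIntegral_mono' hs ?_
          intro x hx
          refine ENNReal.ofReal_le_ofReal ?_
          rw [habsD x hx]
          have hx01 := hsub hx
          have hden : (0:ℝ) < q + q'*x := by nlinarith [hx01.1]
          have he1 : q + q' ≤ 2*(q+q'*x) := by nlinarith [mul_nonneg hq' hx01.1.le]
          have h4 : (q+q')^2 ≤ 4 * (q + q'*x)^2 := by
            have := pow_le_pow_left₀ (by positivity) he1 2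
            nlinarith [this]
          rw [inv_pow, show (4:ℝ) * ((q+q')^2)⁻¹ = ((q+q')^2/4)⁻¹ by field_simp]
          exact inv_anti₀ (by positivity) (by linarith)
      _ = ENNReal.ofReal (4 * (q+q')⁻¹^2) * volume s := setLIntegral_const s _
      _ = 4 * ENNReal.ofReal ((q+q')⁻¹^2) * volume s := by
          rw [ENNReal.ofReal_mul (by norm_num)]
          norm_num

end CFAux
namespace CFAux

lemma measurable_gaussMap : Measurable gaussMap := by
  unfold gaussMap
  exact measurable_fract.comp measurable_inv

lemma measurable_iterate (n : ℕ) : Measurable (gaussMap^[n]) := by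
  induction n with
  | zero => exact measurable_id
  | succ n ih =>
    rw [Function.iterate_succ]
    exact ih.comp measurable_gaussMap

lemma measurable_dig (i : ℕ) : Measurable (dig i) := by
  have : dig i = fun x => (⌊(gaussMap^[i] x)⁻¹⌋).toNat := by
    funext x; exact dig_eq i x
  rw [this]
  exact Measurable.comp (measurable_from_top : Measurable Int.toNat)
    (Int.measurable_floor.comp (measurable_iterate i).inv)

lemma measurableSet_digitsL_eq (n : ℕ) (w : List ℕ) :
    MeasurableSet {x : ℝ | digitsL n x = w} := by
  by_cases h : w.length = n
  · have heq : {x : ℝ | digitsL n x = w} = ⋂ i ∈ Finset.range n, {x | dig i x = w.getD i 0} := by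
      ext x
      simp only [Set.mem_setOf_eq, Set.mem_iInter, Finset.mem_range]
      constructor
      · intro hw i hi
        rw [← hw, digitsL_get n x i hi]
      · intro hall
        refine List.ext_getElem (by rw [digitsL_length, h]) ?_
        intro i hi1 hi2
        rw [digitsL_length] at hi1
        have hlast := hall i hi1
        have h1 : (digitsL n x)[i] = dig i x := by simp [digitsL]
        have h2 : w.getD i 0 = w[i] := by
          rw [List.getD_eq_getElem?_getD, List.getElem?_eq_getElem hi2]
          rfl
        rw [h1, hlast, h2]
    rw [heq]
    exact MeasurableSet.biInter (Set.to_countable _)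
      (fun i _ => (measurable_dig i) (measurableSet_singleton _))
  · have : {x : ℝ | digitsL n x = w} = ∅ := by
      ext x
      simp only [Set.mem_setOf_eq, Set.mem_empty_iff_false, iff_false]
      intro hx
      exact h (by rw [← hx, digitsL_length])
    rw [this]
    exact MeasurableSet.empty

/-- The set of points of `Irr01` whose first `n` digits satisfy `P`. -/
def PSet (n : ℕ) (P : List ℕ → Prop) : Set ℝ := {x | x ∈ Irr01 ∧ P (digitsL n x)}

lemma PSet_eq_biUnion (n : ℕ) (P : List ℕ → Prop) :
    PSet n P = ⋃ w ∈ {w : List ℕ | P w}, (Irr01 ∩ {x | digitsL n x = w}) := by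
  ext x
  simp only [PSet, Set.mem_setOf_eq, Set.mem_iUnion, Set.mem_inter_iff, exists_prop]
  constructor
  · rintro ⟨h1, h2⟩; exact ⟨digitsL n x, h2, h1, rfl⟩
  · rintro ⟨w, hw, h1, h2⟩; exact ⟨h1, h2 ▸ hw⟩

lemma measurableSet_PSet (n : ℕ) (P : List ℕ → Prop) : MeasurableSet (PSet n P) := by
  rw [PSet_eq_biUnion]
  exact MeasurableSet.biUnion (Set.to_countable _)
    (fun w _ => measurableSet_Irr01.inter (measurableSet_digitsL_eq n w))

lemma PSet_subset (n : ℕ) (P : List ℕ → Prop) : PSet n P ⊆ Irr01 := fun _ h => h.1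

/-- Cylinder–image correspondence. -/
lemma cyl_inter_eq (w : List ℕ) (hadm : ∀ b ∈ w, 1 ≤ b) (B : Set ℝ) :
    (Irr01 ∩ {x | digitsL w.length x = w}) ∩ gaussMap^[w.length] ⁻¹' B
      = cylMap w '' (B ∩ Irr01) := by
  ext x
  constructor
  · rintro ⟨⟨hx, hdg⟩, hB⟩
    obtain ⟨hit, -, hcyl⟩ := digits_spec w.length x hx
    refine ⟨gaussMap^[w.length] x, ⟨hB, hit⟩, ?_⟩
    rw [hdg] at hcyl
    exact hcyl
  · rintro ⟨y, ⟨hyB, hy⟩, rfl⟩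
    obtain ⟨hmem, hit, hdg⟩ := cylMap_spec w hadm y hy
    exact ⟨⟨hmem, hdg⟩, by rw [Set.mem_preimage, hit]; exact hyB⟩

/-- Decomposition of a digit-determined set intersected with a pullback. -/
lemma PSet_inter_preimage_eq (n : ℕ) (P : List ℕ → Prop) (B : Set ℝ) :
    PSet n P ∩ gaussMap^[n] ⁻¹' B
      = ⋃ w ∈ {w : List ℕ | P w ∧ w.length = n ∧ ∀ b ∈ w, 1 ≤ b},
          cylMap w '' (B ∩ Irr01) := by
  ext x
  simp only [Set.mem_iUnion, Set.mem_inter_iff, Set.mem_setOf_eq, exists_prop, PSet]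
  constructor
  · rintro ⟨⟨hx, hP⟩, hB⟩
    refine ⟨digitsL n x, ⟨hP, digitsL_length n x, (digits_spec n x hx).2.1⟩, ?_⟩
    rw [← cyl_inter_eq (digitsL n x) (digits_spec n x hx).2.1 B]
    constructor
    · constructor
      · exact hx
      · rw [Set.mem_setOf_eq, digitsL_length]
    · rw [digitsL_length]; exact hB
  · rintro ⟨w, ⟨hP, hlen, hadm⟩, hx⟩
    rw [← cyl_inter_eq w hadm B] at hx
    obtain ⟨⟨hmem, hdg⟩, hpre⟩ := hx
    rw [Set.mem_setOf_eq, hlen] at hdg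
    refine ⟨⟨hmem, hdg ▸ hP⟩, ?_⟩
    rw [hlen] at hpre
    exact hpre

end CFAux
namespace CFAux

section Master

variable (n : ℕ) (P : List ℕ → Prop) (B : Set ℝ)

lemma master_decomp (hB : MeasurableSet B) :
    volume (PSet n P ∩ gaussMap^[n] ⁻¹' B)
      = ∑' w : {w : List ℕ | P w ∧ w.length = n ∧ ∀ b ∈ w, 1 ≤ b},
          volume (cylMap (w : List ℕ) '' (B ∩ Irr01)) := by
  rw [PSet_inter_preimage_eq]
  refine measure_biUnion (Set.to_countable _) ?_ ?_
  · intro w hw w' hw' hne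
    simp only [Function.onFun]
    rw [Set.disjoint_left]
    intro x hx hx'
    rw [← cyl_inter_eq _ hw.2.2 B] at hx
    rw [← cyl_inter_eq _ hw'.2.2 B] at hx'
    have h1 : digitsL w.length x = w := hx.1.2
    have h2 : digitsL w'.length x = w' := hx'.1.2
    rw [hw.2.1] at h1
    rw [hw'.2.1] at h2
    exact hne (h1 ▸ h2 ▸ rfl)
  · intro w hw
    rw [← cyl_inter_eq _ hw.2.2 B]
    exact ((measurableSet_Irr01.inter (measurableSet_digitsL_eq _ _)).inter
      ((measurable_iterate _) hB))

lemma volume_PSet_decomp :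
    volume (PSet n P)
      = ∑' w : {w : List ℕ | P w ∧ w.length = n ∧ ∀ b ∈ w, 1 ≤ b},
          volume (cylMap (w : List ℕ) '' Irr01) := by
  have h := master_decomp n P Set.univ MeasurableSet.univ
  simpa using h

lemma master_upper (hB : MeasurableSet B) :
    volume (PSet n P ∩ gaussMap^[n] ⁻¹' B)
      ≤ 4 * volume (B ∩ Set.Ioo 0 1) * volume (PSet n P) := by
  rw [master_decomp n P B hB, volume_PSet_decomp n P, ENNReal.tsum_mul_left.symm]
  refine ENNReal.tsum_le_tsum ?_
  rintro ⟨w, hP, hlen, hadm⟩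
  obtain ⟨r, hr, hbd⟩ := cyl_image_bounds w hadm
  have hBmeas : MeasurableSet (B ∩ Irr01) := hB.inter measurableSet_Irr01
  have hBsub : B ∩ Irr01 ⊆ Set.Ioo 0 1 := Set.inter_subset_right.trans Irr01_subset
  have h1 := (hbd (B ∩ Irr01) hBmeas hBsub).2
  have h2 := (hbd Irr01 measurableSet_Irr01 Irr01_subset).1
  rw [volume_Irr01, mul_one] at h2
  calc volume (cylMap w '' (B ∩ Irr01))
      ≤ 4 * ENNReal.ofReal r * volume (B ∩ Irr01) := h1
    _ = 4 * volume (B ∩ Set.Ioo 0 1) * ENNReal.ofReal r := by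
        rw [volume_inter_Irr01]; ring
    _ ≤ 4 * volume (B ∩ Set.Ioo 0 1) * volume (cylMap w '' Irr01) := by
        exact mul_le_mul_right h2 _

lemma master_lower (hB : MeasurableSet B) :
    volume (B ∩ Set.Ioo 0 1) * volume (PSet n P)
      ≤ 4 * volume (PSet n P ∩ gaussMap^[n] ⁻¹' B) := by
  rw [master_decomp n P B hB, volume_PSet_decomp n P, ENNReal.tsum_mul_left.symm,
    ENNReal.tsum_mul_left.symm]
  refine ENNReal.tsum_le_tsum ?_
  rintro ⟨w, hP, hlen, hadm⟩
  obtain ⟨r, hr, hbd⟩ := cyl_image_bounds w hadm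
  have hBmeas : MeasurableSet (B ∩ Irr01) := hB.inter measurableSet_Irr01
  have hBsub : B ∩ Irr01 ⊆ Set.Ioo 0 1 := Set.inter_subset_right.trans Irr01_subset
  have h3 := (hbd Irr01 measurableSet_Irr01 Irr01_subset).2
  rw [volume_Irr01, mul_one] at h3
  have h4 := (hbd (B ∩ Irr01) hBmeas hBsub).1
  calc volume (B ∩ Set.Ioo 0 1) * volume (cylMap w '' Irr01)
      ≤ volume (B ∩ Set.Ioo 0 1) * (4 * ENNReal.ofReal r) := mul_le_mul_right h3 _
    _ = 4 * (ENNReal.ofReal r * volume (B ∩ Irr01)) := by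
        rw [volume_inter_Irr01]; ring
    _ ≤ 4 * volume (cylMap w '' (B ∩ Irr01)) := mul_le_mul_right h4 _

end Master

end CFAux
namespace CFAux

lemma measurable_cfDigit_real (r : ℕ) : Measurable (fun y : ℝ => ((cfDigit r y : ℤ) : ℝ)) := by
  unfold cfDigit
  exact Measurable.comp (measurable_from_top : Measurable (Int.cast : ℤ → ℝ))
    (Int.measurable_floor.comp (measurable_iterate (r-1)).inv)

/-- The event that the first digit is at least `N`. -/
def Big1 (N : ℝ) : Set ℝ := {y : ℝ | N ≤ ((cfDigit 1 y : ℤ) : ℝ)}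

lemma measurableSet_Big1 (N : ℝ) : MeasurableSet (Big1 N) :=
  measurableSet_le measurable_const (measurable_cfDigit_real 1)

lemma volume_Big1 (N : ℝ) (hN : 0 < N) :
    volume (Big1 N ∩ Set.Ioo 0 1) ≤ ENNReal.ofReal N⁻¹ := by
  have hsub : Big1 N ∩ Set.Ioo 0 1 ⊆ Set.Ioc 0 N⁻¹ := by
    rintro y ⟨hy, hy01⟩
    have hy0 : 0 < y := hy01.1
    have hfl : ((⌊y⁻¹⌋ : ℤ) : ℝ) ≤ y⁻¹ := Int.floor_le _
    have hNy : N ≤ y⁻¹ := le_trans hy hfl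
    refine ⟨hy0, ?_⟩
    calc y = (y⁻¹)⁻¹ := (inv_inv y).symm
      _ ≤ N⁻¹ := by
          exact inv_anti₀ hN hNy
  calc volume (Big1 N ∩ Set.Ioo 0 1) ≤ volume (Set.Ioc 0 N⁻¹) := measure_mono hsub
    _ = ENNReal.ofReal N⁻¹ := by rw [Real.volume_Ioc, sub_zero]

lemma volume_PSet_le_one (n : ℕ) (P : List ℕ → Prop) : volume (PSet n P) ≤ 1 := by
  calc volume (PSet n P) ≤ volume Irr01 := measure_mono (PSet_subset n P)
    _ = 1 := volume_Irr01

/-- Single-digit tail bound. -/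
lemma digit_tail_bound (k : ℕ) (hk : 1 ≤ k) (N : ℝ) (hN : 0 < N) :
    volume {x | x ∈ Irr01 ∧ N ≤ ((cfDigit k x : ℤ) : ℝ)} ≤ 4 * ENNReal.ofReal N⁻¹ := by
  have hset : {x | x ∈ Irr01 ∧ N ≤ ((cfDigit k x : ℤ) : ℝ)}
      = PSet (k-1) (fun _ => True) ∩ gaussMap^[k-1] ⁻¹' (Big1 N) := by
    ext x
    simp only [Set.mem_setOf_eq, Set.mem_inter_iff, Set.mem_preimage, PSet, Big1, and_true]
    constructor
    · rintro ⟨hx, hd⟩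
      refine ⟨hx, ?_⟩
      have h1 := cfDigit_shift (k-1) k (by omega) x
      have h2 : k - (k-1) = 1 := by omega
      rw [h2] at h1
      rw [← h1]
      exact hd
    · rintro ⟨hx, hd⟩
      refine ⟨hx, ?_⟩
      have h1 := cfDigit_shift (k-1) k (by omega) x
      have h2 : k - (k-1) = 1 := by omega
      rw [h2] at h1
      rw [h1]
      exact hd
  rw [hset]
  calc volume (PSet (k-1) (fun _ => True) ∩ gaussMap^[k-1] ⁻¹' (Big1 N))
      ≤ 4 * volume (Big1 N ∩ Set.Ioo 0 1) * volume (PSet (k-1) (fun _ => True)) :=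
        master_upper (k-1) _ (Big1 N) (measurableSet_Big1 N)
    _ ≤ 4 * ENNReal.ofReal N⁻¹ * 1 := by
        exact mul_le_mul' (mul_le_mul_right (volume_Big1 N hN) 4) (volume_PSet_le_one _ _)
    _ = 4 * ENNReal.ofReal N⁻¹ := by rw [mul_one]

/-- The set of points all of whose first `R` digits are `< M`. -/
def SmallSet (R : ℕ) (M : ℝ) : Set ℝ := PSet R (fun w => ∀ b ∈ w, (b : ℝ) < M)

lemma mem_SmallSet (R : ℕ) (M : ℝ) (x : ℝ) :
    x ∈ SmallSet R M ↔ x ∈ Irr01 ∧ ∀ r : ℕ, 1 ≤ r → r ≤ R → ((cfDigit r x : ℤ) : ℝ) < M := by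
  constructor
  · rintro ⟨hx, hP⟩
    refine ⟨hx, ?_⟩
    intro r hr1 hrR
    have hb : dig (r-1) x ∈ digitsL R x := by
      simp only [digitsL, List.mem_map, List.mem_range]
      exact ⟨r-1, by omega, rfl⟩
    have := hP _ hb
    rw [cfDigit_eq_dig hx r hr1]
    exact_mod_cast this
  · rintro ⟨hx, hall⟩
    refine ⟨hx, ?_⟩
    intro b hb
    simp only [digitsL, List.mem_map, List.mem_range] at hb
    obtain ⟨i, hiR, rfl⟩ := hb
    have := hall (i+1) (by omega) (by omega)
    rw [cfDigit_eq_dig hx (i+1) (by omega)] at this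
    simpa using this

lemma measurableSet_SmallSet (R : ℕ) (M : ℝ) : MeasurableSet (SmallSet R M) :=
  measurableSet_PSet _ _

lemma SmallSet_subset (R : ℕ) (M : ℝ) : SmallSet R M ⊆ Irr01 := PSet_subset _ _

/-- Lower bound for the small-digit set. -/
lemma small_lower (M : ℝ) (hM : 4 < M) :
    ∀ R : ℕ, ENNReal.ofReal ((1 - 4/M)^R) ≤ volume (SmallSet R M) := by
  have hM0 : (0:ℝ) < M := by linarith
  have h4M : 0 < 4/M := by positivity
  have h4M1 : 4/M < 1 := by rw [div_lt_one hM0]; linarith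
  intro R
  induction R with
  | zero =>
    have : SmallSet 0 M = Irr01 := by
      ext x
      rw [mem_SmallSet]
      simp only [and_iff_left_iff_imp]
      intro _ r h1 h0
      omega
    rw [this, volume_Irr01]
    simp
  | succ R ih =>
    set A := SmallSet R M with hA
    -- splitting
    have hsplit : volume A = volume (SmallSet (R+1) M) + volume (A ∩ gaussMap^[R] ⁻¹' (Big1 M)) := by
      have hpre : MeasurableSet (gaussMap^[R] ⁻¹' (Big1 M)) :=
        (measurable_iterate R) (measurableSet_Big1 M)
      have hdiff : A \ gaussMap^[R] ⁻¹' (Big1 M) = SmallSet (R+1) M := by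
        ext x
        simp only [Set.mem_diff, Set.mem_preimage, mem_SmallSet, hA, Big1, Set.mem_setOf_eq]
        constructor
        · rintro ⟨⟨hx, hall⟩, hnb⟩
          refine ⟨hx, ?_⟩
          intro r hr1 hrR
          rcases Nat.lt_or_ge r (R+1) with h | h
          · exact hall r hr1 (by omega)
          · have : r = R + 1 := by omega
            subst this
            push_neg at hnb
            have heq : cfDigit (R+1) x = cfDigit 1 (gaussMap^[R] x) := by
              have := cfDigit_shift R (R+1) (by omega) x
              simpa using this
            rw [heq]
            exact hnb
        · rintro ⟨hx, hall⟩
          refine ⟨⟨hx, fun r hr1 hrR => hall r hr1 (by omega)⟩, ?_⟩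
          intro hb
          have heq : cfDigit (R+1) x = cfDigit 1 (gaussMap^[R] x) := by
            have := cfDigit_shift R (R+1) (by omega) x
            simpa using this
          have := hall (R+1) (by omega) (le_refl _)
          rw [heq] at this
          linarith
      have := measure_inter_add_diff A hpre (μ := volume)
      rw [hdiff] at this
      rw [← this, add_comm]
    -- upper bound on the removed part
    have hbig : volume (A ∩ gaussMap^[R] ⁻¹' (Big1 M)) ≤ ENNReal.ofReal (4/M) * volume A := by
      calc volume (A ∩ gaussMap^[R] ⁻¹' (Big1 M))
          ≤ 4 * volume (Big1 M ∩ Set.Ioo 0 1) * volume A :=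
            master_upper R _ (Big1 M) (measurableSet_Big1 M)
        _ ≤ 4 * ENNReal.ofReal M⁻¹ * volume A :=
            mul_le_mul' (mul_le_mul_right (volume_Big1 M hM0) 4) (le_refl _)
        _ = ENNReal.ofReal (4/M) * volume A := by
            rw [div_eq_mul_inv, ENNReal.ofReal_mul (by norm_num)]
            norm_num
    -- conclude
    have hAle : volume A ≤ 1 := volume_PSet_le_one _ _
    have hAfin : volume A ≠ ⊤ := ne_top_of_le_ne_top ENNReal.one_ne_top hAle
    have hkey : ENNReal.ofReal (1 - 4/M) * volume A ≤ volume (SmallSet (R+1) M) := by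
      have h1 : ENNReal.ofReal (1 - 4/M) * volume A + ENNReal.ofReal (4/M) * volume A
          = volume A := by
        rw [← add_mul, ← ENNReal.ofReal_add (by linarith) (by positivity)]
        rw [show (1 - 4/M) + 4/M = 1 by ring]
        simp
      have h2 : volume A ≤ volume (SmallSet (R+1) M) + ENNReal.ofReal (4/M) * volume A :=
        le_trans (le_of_eq hsplit) (add_le_add_right hbig _)
      have h3 : ENNReal.ofReal (1 - 4/M) * volume A + ENNReal.ofReal (4/M) * volume A
          ≤ volume (SmallSet (R+1) M) + ENNReal.ofReal (4/M) * volume A :=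
        h1.le.trans h2
      have hfin : ENNReal.ofReal (4/M) * volume A ≠ ⊤ :=
        ENNReal.mul_ne_top ENNReal.ofReal_ne_top hAfin
      exact (ENNReal.add_le_add_iff_right hfin).mp h3
    calc ENNReal.ofReal ((1 - 4/M)^(R+1))
        = ENNReal.ofReal (1 - 4/M) * ENNReal.ofReal ((1 - 4/M)^R) := by
          rw [← ENNReal.ofReal_mul (by linarith)]
          rw [← pow_succ']
      _ ≤ ENNReal.ofReal (1 - 4/M) * volume A := mul_le_mul_right ih _
      _ ≤ volume (SmallSet (R+1) M) := hkey

end CFAux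
namespace CFAux

def BigBlock (R : ℕ) (M : ℝ) : Set ℝ :=
  {y | ∃ r : ℕ, 1 ≤ r ∧ r ≤ R ∧ M ≤ ((cfDigit r y : ℤ) : ℝ)}

lemma measurableSet_BigBlock (R : ℕ) (M : ℝ) : MeasurableSet (BigBlock R M) := by
  have : BigBlock R M = ⋃ r : ℕ, ⋃ (_ : 1 ≤ r ∧ r ≤ R), {y : ℝ | M ≤ ((cfDigit r y : ℤ) : ℝ)} := by
    ext y
    simp only [BigBlock, Set.mem_setOf_eq, Set.mem_iUnion]
    tauto
  rw [this]
  exact MeasurableSet.iUnion fun r => MeasurableSet.iUnion fun _ =>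
    measurableSet_le measurable_const (measurable_cfDigit_real r)

lemma block_bound (n R : ℕ) (P : List ℕ → Prop) (M : ℝ) (hM : 4 < M) :
    4 * volume (PSet n P ∩ gaussMap^[n] ⁻¹' (BigBlock R M))
        + ENNReal.ofReal ((1 - 4/M)^R) * volume (PSet n P)
      ≤ 4 * volume (PSet n P) := by
  set A := PSet n P with hA
  have hAmeas : MeasurableSet A := measurableSet_PSet n P
  have hsplit : volume A = volume (A ∩ gaussMap^[n] ⁻¹' (BigBlock R M))
      + volume (A ∩ gaussMap^[n] ⁻¹' (SmallSet R M)) := by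
    have hcover : A = (A ∩ gaussMap^[n] ⁻¹' (BigBlock R M))
        ∪ (A ∩ gaussMap^[n] ⁻¹' (SmallSet R M)) := by
      ext x
      simp only [Set.mem_union, Set.mem_inter_iff, Set.mem_preimage]
      constructor
      · intro hx
        have hxI : x ∈ Irr01 := PSet_subset n P hx
        have hGx : gaussMap^[n] x ∈ Irr01 := iterate_mem_Irr01 hxI n
        by_cases hbig : gaussMap^[n] x ∈ BigBlock R M
        · exact Or.inl ⟨hx, hbig⟩
        · refine Or.inr ⟨hx, ?_⟩
          rw [mem_SmallSet]
          refine ⟨hGx, ?_⟩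
          intro r hr1 hrR
          by_contra hcon
          push_neg at hcon
          exact hbig ⟨r, hr1, hrR, hcon⟩
      · rintro (⟨hx, -⟩ | ⟨hx, -⟩) <;> exact hx
    have hdisj : Disjoint (A ∩ gaussMap^[n] ⁻¹' (BigBlock R M))
        (A ∩ gaussMap^[n] ⁻¹' (SmallSet R M)) := by
      rw [Set.disjoint_left]
      rintro x ⟨-, hb⟩ ⟨-, hs⟩
      rw [Set.mem_preimage] at hb hs
      rw [mem_SmallSet] at hs
      obtain ⟨r, hr1, hrR, hge⟩ := hb
      exact absurd (hs.2 r hr1 hrR) (not_lt.mpr hge)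
    rw [← measure_union hdisj (hAmeas.inter ((measurable_iterate n) (measurableSet_SmallSet R M))),
      ← hcover]
  have hlow : ENNReal.ofReal ((1 - 4/M)^R) * volume A
      ≤ 4 * volume (A ∩ gaussMap^[n] ⁻¹' (SmallSet R M)) := by
    have hml := master_lower n P (SmallSet R M) (measurableSet_SmallSet R M)
    have heq : SmallSet R M ∩ Set.Ioo 0 1 = SmallSet R M :=
      Set.inter_eq_left.mpr ((SmallSet_subset R M).trans Irr01_subset)
    rw [heq] at hml
    calc ENNReal.ofReal ((1 - 4/M)^R) * volume A
        ≤ volume (SmallSet R M) * volume A := mul_le_mul_left (small_lower M hM R) _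
      _ ≤ 4 * volume (A ∩ gaussMap^[n] ⁻¹' (SmallSet R M)) := hml
  calc 4 * volume (A ∩ gaussMap^[n] ⁻¹' (BigBlock R M))
        + ENNReal.ofReal ((1 - 4/M)^R) * volume A
      ≤ 4 * volume (A ∩ gaussMap^[n] ⁻¹' (BigBlock R M))
        + 4 * volume (A ∩ gaussMap^[n] ⁻¹' (SmallSet R M)) := add_le_add_right hlow _
    _ = 4 * volume A := by rw [hsplit, mul_add]

end CFAux
namespace CFAux

lemma exp_neg_le_one_sub {t : ℝ} (h0 : 0 ≤ t) (h2 : t ≤ 1/2) :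
    Real.exp (-(2*t)) ≤ 1 - t := by
  have h3 : 2*t + 1 ≤ Real.exp (2*t) := Real.add_one_le_exp (2*t)
  have h4 : Real.exp (-(2*t)) = (Real.exp (2*t))⁻¹ := by
    rw [Real.exp_neg]
  rw [h4]
  have h5 : (Real.exp (2*t))⁻¹ ≤ (1 + 2*t)⁻¹ := by
    apply inv_anti₀ (by linarith)
    linarith
  refine h5.trans ?_
  rw [inv_eq_one_div, div_le_iff₀ (by linarith)]
  nlinarith

lemma exp_bound (c : ℝ) (hc : 0 < c) (n R : ℕ) (h8 : 8 ≤ c * n) (hRn : R ≤ n) :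
    Real.exp (-(8/c)) ≤ (1 - 4/(c*n))^R := by
  have hn0 : 0 < (n:ℝ) := by
    rcases Nat.eq_zero_or_pos n with rfl | h
    · simp at h8; nlinarith
    · exact_mod_cast h
  have hcn : 0 < c * n := by positivity
  set t : ℝ := 4/(c*n) with ht
  have ht0 : 0 ≤ t := by positivity
  have ht2 : t ≤ 1/2 := by
    rw [ht, div_le_iff₀ hcn]
    nlinarith
  have hstep : Real.exp (-(2*t)) ≤ 1 - t := exp_neg_le_one_sub ht0 ht2
  have hpow : (Real.exp (-(2*t)))^R ≤ (1 - t)^R :=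
    pow_le_pow_left₀ (Real.exp_pos _).le hstep R
  have hex : (Real.exp (-(2*t)))^R = Real.exp ((R:ℝ) * (-(2*t))) := by
    rw [← Real.exp_nat_mul]
  have hmono : Real.exp (-(8/c)) ≤ Real.exp ((R:ℝ) * (-(2*t))) := by
    apply Real.exp_le_exp.mpr
    have hR0 : (0:ℝ) ≤ R := Nat.cast_nonneg R
    have hRn' : (R:ℝ) ≤ n := by exact_mod_cast hRn
    rw [ht]
    rw [show (R:ℝ) * (-(2*(4/(c*n)))) = -(8*R/(c*n)) by ring]
    rw [neg_le_neg_iff]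
    rw [div_le_div_iff₀ hcn hc]
    nlinarith
  calc Real.exp (-(8/c)) ≤ Real.exp ((R:ℝ) * (-(2*t))) := hmono
    _ = (Real.exp (-(2*t)))^R := hex.symm
    _ ≤ (1 - t)^R := hpow

lemma getD_digitsL {x : ℝ} (hx : x ∈ Irr01) {k n : ℕ} (h1 : 1 ≤ k) (h2 : k ≤ n) :
    (((digitsL n x).getD (k-1) 0 : ℕ) : ℝ) = ((cfDigit k x : ℤ) : ℝ) := by
  rw [digitsL_get n x (k-1) (by omega), cfDigit_eq_dig hx k h1]
  push_cast
  rfl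

def Qpred (c : ℝ) (L j₀ J : ℕ) : List ℕ → Prop := fun w =>
  ∀ j : ℕ, j₀ < j → j ≤ J → ∃ k : ℕ, 1 ≤ k ∧ k ≤ L^j ∧
    c * ((L^j : ℕ) : ℝ) ≤ ((w.getD (k-1) 0 : ℕ) : ℝ)

def VSet (c : ℝ) (L j₀ J : ℕ) : Set ℝ := PSet (L^J) (Qpred c L j₀ J)

lemma mem_VSet (c : ℝ) (L j₀ J : ℕ) (hL : 1 ≤ L) (x : ℝ) :
    x ∈ VSet c L j₀ J ↔ x ∈ Irr01 ∧ ∀ j : ℕ, j₀ < j → j ≤ J →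
      ∃ k : ℕ, 1 ≤ k ∧ k ≤ L^j ∧ c * ((L^j : ℕ) : ℝ) ≤ ((cfDigit k x : ℤ) : ℝ) := by
  constructor
  · rintro ⟨hx, hQ⟩
    refine ⟨hx, ?_⟩
    intro j hj1 hj2
    obtain ⟨k, hk1, hk2, hk3⟩ := hQ j hj1 hj2
    refine ⟨k, hk1, hk2, ?_⟩
    rw [← getD_digitsL hx hk1 (hk2.trans (Nat.pow_le_pow_right hL hj2))]
    exact hk3
  · rintro ⟨hx, hall⟩
    refine ⟨hx, ?_⟩
    intro j hj1 hj2
    obtain ⟨k, hk1, hk2, hk3⟩ := hall j hj1 hj2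
    refine ⟨k, hk1, hk2, ?_⟩
    rw [getD_digitsL hx hk1 (hk2.trans (Nat.pow_le_pow_right hL hj2))]
    exact hk3

lemma recursion (c : ℝ) (hc : 0 < c) (L j₀ J : ℕ) (hL : 2 ≤ L) (hJ0 : j₀ ≤ J)
    (h8 : 8 ≤ c * ((L^(J+1) : ℕ) : ℝ)) :
    (volume (VSet c L j₀ (J+1))).toReal
      ≤ 4/(c*L) + (1 - Real.exp (-(8/c))/4) * (volume (VSet c L j₀ J)).toReal := by
  have hL1 : 1 ≤ L := by omega
  have hLJ : (1:ℕ) ≤ L^J := Nat.one_le_pow _ _ (by omega)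
  have hLJ1 : L^J ≤ L^(J+1) := Nat.pow_le_pow_right hL1 (by omega)
  set N : ℝ := c * ((L^(J+1) : ℕ) : ℝ) with hN
  have hN0 : 0 < N := by
    have : (0:ℝ) < ((L^(J+1) : ℕ) : ℝ) := by
      exact_mod_cast Nat.one_le_pow _ _ (by omega : 0 < L)
    positivity
  set R : ℕ := L^(J+1) - L^J with hR
  set DD : Set ℝ := {x | x ∈ Irr01 ∧ ∃ k : ℕ, 1 ≤ k ∧ k ≤ L^J ∧ N ≤ ((cfDigit k x : ℤ) : ℝ)}
    with hDD
  set pre : Set ℝ := gaussMap^[L^J] ⁻¹' (BigBlock R N) with hpre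
  -- inclusion
  have hsub : VSet c L j₀ (J+1) ⊆ DD ∪ (VSet c L j₀ J ∩ pre) := by
    intro x hx
    rw [mem_VSet c L j₀ (J+1) hL1] at hx
    obtain ⟨hxI, hall⟩ := hx
    have hVJ : x ∈ VSet c L j₀ J := by
      rw [mem_VSet c L j₀ J hL1]
      exact ⟨hxI, fun j h1 h2 => hall j h1 (by omega)⟩
    obtain ⟨k, hk1, hk2, hk3⟩ := hall (J+1) (by omega) (le_refl _)
    rcases le_or_gt k (L^J) with hkle | hkgt
    · exact Or.inl ⟨hxI, k, hk1, hkle, hk3⟩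
    · refine Or.inr ⟨hVJ, ?_⟩
      rw [hpre, Set.mem_preimage]
      refine ⟨k - L^J, by omega, by omega, ?_⟩
      rw [← cfDigit_shift (L^J) k (by omega) x]
      exact hk3
  -- volume of DD
  have hDDvol : volume DD ≤ ENNReal.ofReal (4/(c*L)) := by
    have hsub2 : DD ⊆ ⋃ k ∈ Finset.Icc 1 (L^J),
        {x | x ∈ Irr01 ∧ N ≤ ((cfDigit k x : ℤ) : ℝ)} := by
      rintro x ⟨hxI, k, hk1, hk2, hk3⟩
      simp only [Set.mem_iUnion, Finset.mem_Icc, exists_prop]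
      exact ⟨k, ⟨hk1, hk2⟩, hxI, hk3⟩
    calc volume DD ≤ volume (⋃ k ∈ Finset.Icc 1 (L^J),
          {x | x ∈ Irr01 ∧ N ≤ ((cfDigit k x : ℤ) : ℝ)}) := measure_mono hsub2
      _ ≤ ∑ k ∈ Finset.Icc 1 (L^J), volume {x | x ∈ Irr01 ∧ N ≤ ((cfDigit k x : ℤ) : ℝ)} :=
          measure_biUnion_finset_le _ _
      _ ≤ ∑ k ∈ Finset.Icc 1 (L^J), ENNReal.ofReal (4/N) := by
          refine Finset.sum_le_sum ?_
          intro k hk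
          rw [Finset.mem_Icc] at hk
          have := digit_tail_bound k hk.1 N hN0
          calc volume {x | x ∈ Irr01 ∧ N ≤ ((cfDigit k x : ℤ) : ℝ)}
              ≤ 4 * ENNReal.ofReal N⁻¹ := this
            _ = ENNReal.ofReal (4/N) := by
                rw [div_eq_mul_inv, ENNReal.ofReal_mul (by norm_num)]
                norm_num
      _ = (L^J : ℕ) • ENNReal.ofReal (4/N) := by
          have hcard : (Finset.Icc 1 (L^J)).card = L^J := by
            rw [Nat.card_Icc]
            omega
          rw [Finset.sum_const, hcard]
      _ = ENNReal.ofReal ((L^J : ℕ) * (4/N)) := by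
          rw [nsmul_eq_mul, ← ENNReal.ofReal_natCast, ← ENNReal.ofReal_mul (Nat.cast_nonneg _)]
      _ = ENNReal.ofReal (4/(c*L)) := by
          congr 1
          rw [hN]
          have hcast : ((L^(J+1) : ℕ) : ℝ) = ((L^J : ℕ) : ℝ) * (L:ℝ) := by
            push_cast [pow_succ]
            ring
          rw [hcast]
          have hLJ0 : (0:ℝ) < ((L^J : ℕ) : ℝ) := by exact_mod_cast hLJ
          field_simp
  -- block bound
  set η : ℝ := Real.exp (-(8/c)) with hη
  have hηpos : 0 < η := Real.exp_pos _
  have hη1 : η ≤ 1 := by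
    rw [hη, Real.exp_le_one_iff]
    have : 0 < 8/c := by positivity
    linarith
  have hblock : 4 * volume (VSet c L j₀ J ∩ pre) + ENNReal.ofReal η * volume (VSet c L j₀ J)
      ≤ 4 * volume (VSet c L j₀ J) := by
    have hbb := block_bound (L^J) R (Qpred c L j₀ J) N (by nlinarith)
    have hee : ENNReal.ofReal η ≤ ENNReal.ofReal ((1 - 4/N)^R) := by
      apply ENNReal.ofReal_le_ofReal
      have := exp_bound c hc (L^(J+1)) R (by exact_mod_cast h8) (by omega)
      rw [hη]
      convert this using 2
    calc 4 * volume (VSet c L j₀ J ∩ pre) + ENNReal.ofReal η * volume (VSet c L j₀ J)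
        ≤ 4 * volume (VSet c L j₀ J ∩ pre)
          + ENNReal.ofReal ((1 - 4/N)^R) * volume (VSet c L j₀ J) :=
          add_le_add_right (mul_le_mul_left hee _) _
      _ ≤ 4 * volume (VSet c L j₀ J) := hbb
  -- pass to reals
  have hv1 : volume (VSet c L j₀ J) ≤ 1 := volume_PSet_le_one _ _
  have hvfin : volume (VSet c L j₀ J) ≠ ⊤ := ne_top_of_le_ne_top ENNReal.one_ne_top hv1
  have ha1 : volume (VSet c L j₀ (J+1)) ≤ 1 := volume_PSet_le_one _ _
  have hafin : volume (VSet c L j₀ (J+1)) ≠ ⊤ := ne_top_of_le_ne_top ENNReal.one_ne_top ha1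
  have hpfin : volume (VSet c L j₀ J ∩ pre) ≠ ⊤ :=
    ne_top_of_le_ne_top hvfin (measure_mono Set.inter_subset_left)
  have hdfin : volume DD ≠ ⊤ := ne_top_of_le_ne_top ENNReal.ofReal_ne_top hDDvol
  set A := (volume (VSet c L j₀ (J+1))).toReal
  set Vr := (volume (VSet c L j₀ J)).toReal
  set Pr := (volume (VSet c L j₀ J ∩ pre)).toReal
  set Dr := (volume DD).toReal
  have hA : A ≤ Dr + Pr := by
    have h1 : volume (VSet c L j₀ (J+1)) ≤ volume DD + volume (VSet c L j₀ J ∩ pre) :=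
      le_trans (measure_mono hsub) (measure_union_le _ _)
    have := ENNReal.toReal_le_toReal hafin (by
      exact ENNReal.add_ne_top.mpr ⟨hdfin, hpfin⟩) |>.mpr h1
    rwa [ENNReal.toReal_add hdfin hpfin] at this
  have hD : Dr ≤ 4/(c*L) := by
    have := ENNReal.toReal_le_toReal hdfin ENNReal.ofReal_ne_top |>.mpr hDDvol
    rwa [ENNReal.toReal_ofReal (by positivity)] at this
  have hP : 4*Pr + η*Vr ≤ 4*Vr := by
    have hlhsfin : (4 : ℝ≥0∞) * volume (VSet c L j₀ J ∩ pre)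
        + ENNReal.ofReal η * volume (VSet c L j₀ J) ≠ ⊤ := by
      refine ENNReal.add_ne_top.mpr ⟨?_, ?_⟩
      · exact ENNReal.mul_ne_top (by norm_num) hpfin
      · exact ENNReal.mul_ne_top ENNReal.ofReal_ne_top hvfin
    have := ENNReal.toReal_le_toReal hlhsfin
      (ENNReal.mul_ne_top (by norm_num) hvfin) |>.mpr hblock
    rw [ENNReal.toReal_add (ENNReal.mul_ne_top (by norm_num) hpfin)
      (ENNReal.mul_ne_top ENNReal.ofReal_ne_top hvfin),
      ENNReal.toReal_mul, ENNReal.toReal_mul, ENNReal.toReal_mul,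
      ENNReal.toReal_ofReal hηpos.le] at this
    simpa using this
  have hVr0 : 0 ≤ Vr := ENNReal.toReal_nonneg
  nlinarith [hA, hD, hP]

end CFAux
namespace CFAux

lemma Sm_zero (c : ℝ) (hc : 0 < c) (m₀ : ℕ) :
    volume ({x : ℝ | ∀ m : ℕ, m₀ ≤ m →
      ∃ k : ℕ, 1 ≤ k ∧ k ≤ m ∧ c * m ≤ (cfDigit k x : ℝ)} ∩ Irr01) = 0 := by
  set S : Set ℝ := {x : ℝ | ∀ m : ℕ, m₀ ≤ m →
      ∃ k : ℕ, 1 ≤ k ∧ k ≤ m ∧ c * m ≤ (cfDigit k x : ℝ)} ∩ Irr01 with hS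
  set σ : ℝ≥0∞ := volume S with hσ
  have hσ1 : σ ≤ 1 := by
    rw [hσ, ← volume_Irr01]
    exact measure_mono Set.inter_subset_right
  have hσfin : σ ≠ ⊤ := ne_top_of_le_ne_top ENNReal.one_ne_top hσ1
  set η : ℝ := Real.exp (-(8/c)) with hη
  have hηpos : 0 < η := Real.exp_pos _
  have hη1 : η ≤ 1 := by
    rw [hη, Real.exp_le_one_iff]
    have : 0 < 8/c := by positivity
    linarith
  -- main estimate
  have key : ∀ ε : ℝ, 0 < ε → σ.toReal ≤ ε := by
    intro ε hε
    obtain ⟨L, hLgt⟩ := exists_nat_gt (max 2 (32/(c*η*ε)))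
    have hL2 : 2 ≤ L := by
      have := (le_max_left 2 (32/(c*η*ε))).trans_lt hLgt
      exact_mod_cast this.le
    have hL1 : 1 ≤ L := by omega
    have hL1R : (1:ℝ) < (L:ℝ) := by exact_mod_cast (by omega : 1 < L)
    have hLbig : 32/(c*η*ε) ≤ (L:ℝ) := ((le_max_right _ _).trans_lt hLgt).le
    have hL0R : (0:ℝ) < (L:ℝ) := by linarith
    -- choose j₀
    obtain ⟨t, ht⟩ := pow_unbounded_of_one_lt (max (m₀:ℝ) (8/c)) hL1R
    set j₀ := t with hj₀
    have hm₀ : ∀ j : ℕ, j₀ < j → m₀ ≤ L^j := by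
      intro j hj
      have h1 : (m₀:ℝ) < (L:ℝ)^t := (le_max_left _ _).trans_lt ht
      have h2 : (L:ℝ)^t ≤ (L:ℝ)^j := pow_le_pow_right₀ hL1R.le (by omega)
      have : (m₀:ℝ) ≤ ((L^j : ℕ):ℝ) := by
        push_cast
        linarith
      exact_mod_cast this
    have h8 : ∀ j : ℕ, j₀ < j → 8 ≤ c * ((L^j : ℕ):ℝ) := by
      intro j hj
      have h1 : 8/c < (L:ℝ)^t := (le_max_right _ _).trans_lt ht
      have h2 : (L:ℝ)^t ≤ (L:ℝ)^j := pow_le_pow_right₀ hL1R.le (by omega)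
      have h3 : 8/c ≤ ((L^j : ℕ):ℝ) := by
        push_cast
        linarith
      calc (8:ℝ) = c * (8/c) := by field_simp
        _ ≤ c * ((L^j : ℕ):ℝ) := by
            exact mul_le_mul_of_nonneg_left h3 hc.le
    -- S is contained in every VSet
    have hsub : ∀ J : ℕ, S ⊆ VSet c L j₀ J := by
      intro J x hx
      obtain ⟨hxS, hxI⟩ := hx
      rw [mem_VSet c L j₀ J hL1]
      refine ⟨hxI, ?_⟩
      intro j hj1 hj2
      exact hxS (L^j) (hm₀ j hj1)
    -- iterate the recursion
    set ρ : ℝ := 1 - η/4 with hρ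
    have hρ0 : 0 ≤ ρ := by rw [hρ]; linarith
    have hρ1 : ρ < 1 := by rw [hρ]; linarith
    set K : ℝ := 16/(c*(L:ℝ)*η) with hK
    have hK0 : 0 < K := by positivity
    have hKβ : (η/4) * K = 4/(c*(L:ℝ)) := by
      rw [hK]
      field_simp
      ring
    have hiter : ∀ i : ℕ, (volume (VSet c L j₀ (j₀ + i))).toReal ≤ ρ^i + K := by
      intro i
      induction i with
      | zero =>
        simp only [Nat.add_zero, pow_zero]
        have h1 := volume_PSet_le_one (L^j₀) (Qpred c L j₀ j₀)
        have h2 := ENNReal.toReal_mono ENNReal.one_ne_top h1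
        rw [ENNReal.toReal_one] at h2
        have : (volume (VSet c L j₀ j₀)).toReal ≤ 1 := h2
        linarith
      | succ i ih =>
        have hrec := recursion c hc L j₀ (j₀ + i) hL2 (by omega)
          (h8 (j₀ + i + 1) (by omega))
        have hthis : (volume (VSet c L j₀ (j₀ + (i+1)))).toReal
            ≤ 4/(c*(L:ℝ)) + ρ * (volume (VSet c L j₀ (j₀ + i))).toReal := by
          rw [hρ, hη]
          exact hrec
        have hVnn : (0:ℝ) ≤ (volume (VSet c L j₀ (j₀ + i))).toReal := ENNReal.toReal_nonneg
        have hmul : ρ * (volume (VSet c L j₀ (j₀ + i))).toReal ≤ ρ * (ρ^i + K) :=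
          mul_le_mul_of_nonneg_left ih hρ0
        have hc2 : 4/(c*(L:ℝ)) + ρ*K = K := by
          rw [hρ, ← hKβ]
          ring
        have hpow : ρ^(i+1) = ρ^i * ρ := pow_succ ρ i
        have h5 : ρ * (ρ^i + K) = ρ^(i+1) + ρ*K := by
          rw [hpow]
          ring
        clear_value ρ K η
        linarith [hthis, hmul, hc2, h5]
    -- σ ≤ each iterate
    have hσle : ∀ i : ℕ, σ.toReal ≤ ρ^i + K := by
      intro i
      refine le_trans ?_ (hiter i)
      apply ENNReal.toReal_mono
      · exact ne_top_of_le_ne_top ENNReal.one_ne_top (volume_PSet_le_one _ _)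
      · exact measure_mono (hsub (j₀ + i))
    -- choose i
    obtain ⟨i, hi⟩ := exists_pow_lt_of_lt_one (by positivity : (0:ℝ) < ε/2) hρ1
    have hKε : K ≤ ε/2 := by
      rw [hK]
      rw [div_le_iff₀ (by positivity : (0:ℝ) < c*η*ε)] at hLbig
      rw [div_le_iff₀ (by positivity : (0:ℝ) < c*(L:ℝ)*η)]
      nlinarith
    calc σ.toReal ≤ ρ^i + K := hσle i
      _ ≤ ε/2 + ε/2 := add_le_add hi.le hKε
      _ = ε := by ring
  -- conclude σ = 0
  have hz : σ.toReal = 0 := by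
    by_contra h
    have h0 : 0 < σ.toReal := lt_of_le_of_ne ENNReal.toReal_nonneg (Ne.symm h)
    have := key (σ.toReal/2) (by linarith)
    linarith
  rcases (ENNReal.toReal_eq_zero_iff σ).mp hz with h | h
  · exact h
  · exact absurd h hσfin

end CFAux

open CFAux

/-- For any `c > 0`, the set of `x` whose maximal continued fraction digit among the
first `m` digits is eventually always at least `c·m` has Gauss measure zero. -/
theorem cf_max_digit_eah_zero (c : ℝ) (hc : 0 < c) :
    gaussMeasure {x : ℝ | ∃ m₀ : ℕ, ∀ m : ℕ, m₀ ≤ m →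
      ∃ k : ℕ, 1 ≤ k ∧ k ≤ m ∧ c * m ≤ (cfDigit k x : ℝ)} = 0 := by

  set S : Set ℝ := {x : ℝ | ∃ m₀ : ℕ, ∀ m : ℕ, m₀ ≤ m →
      ∃ k : ℕ, 1 ≤ k ∧ k ≤ m ∧ c * m ≤ (cfDigit k x : ℝ)} with hS
  have hSIrr : volume (S ∩ Irr01) = 0 := by
    have hdecomp : S ∩ Irr01 = ⋃ m₀ : ℕ, ({x : ℝ | ∀ m : ℕ, m₀ ≤ m →
        ∃ k : ℕ, 1 ≤ k ∧ k ≤ m ∧ c * m ≤ (cfDigit k x : ℝ)} ∩ Irr01) := by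
      ext x
      simp only [hS, Set.mem_inter_iff, Set.mem_setOf_eq, Set.mem_iUnion]
      tauto
    rw [hdecomp]
    exact measure_iUnion_null fun m₀ => Sm_zero c hc m₀
  have hIcc : volume (S ∩ Set.Icc 0 1) = 0 := by
    have hsub : S ∩ Set.Icc 0 1
        ⊆ (S ∩ Irr01) ∪ (({0, 1} : Set ℝ) ∪ Set.range ((↑) : ℚ → ℝ)) := by
      rintro x ⟨hxS, hxI⟩
      by_cases hirr : Irrational x
      · rcases lt_or_eq_of_le hxI.1 with h0 | h0
        · rcases lt_or_eq_of_le hxI.2 with h1 | h1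
          · exact Or.inl ⟨hxS, ⟨h0, h1⟩, hirr⟩
          · exact Or.inr (Or.inl (by simp [h1]))
        · exact Or.inr (Or.inl (by simp [← h0]))
      · rw [Irrational] at hirr
        push_neg at hirr
        exact Or.inr (Or.inr hirr)
    refine measure_mono_null hsub ?_
    refine measure_union_null hSIrr (measure_union_null ?_ ?_)
    · exact (Set.to_countable ({0,1} : Set ℝ)).measure_zero _
    · exact (Set.countable_range _).measure_zero _
  have hrestrict : (volume.restrict (Set.Icc (0:ℝ) 1)) S = 0 := by
    rw [Measure.restrict_apply' measurableSet_Icc]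
    exact hIcc
  exact (withDensity_absolutelyContinuous _ _) hrestrict
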